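/- arXiv:1701.08185 — 3 statements merged into one kernel-verified Lean document; each statement's English description precedes it below -/
import Mathlib

section
/- Let A be a real n×n positive definite matrix, let B be a real n×k matrix of rank k, let C be a real n×m matrix of rank m (with k ≤ m ≤ n), and suppose there exists a real m×k matrix M such that B = C·M. Then the matrix C (CᵀAC)⁻¹ Cᵀ − B (BᵀAB)⁻¹ Bᵀ is positive semidefinite; that is, B (BᵀAB)⁻¹ Bᵀ ≤ C (CᵀAC)⁻¹ Cᵀ in the Loewner order. -/
open Matrix

lemma aux_mulVec_injective {j n : ℕ} (X : Matrix (Fin n) (Fin j) ℝ) (hX : X.rank = j) :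
    Function.Injective X.mulVec := by
  have h1 : Module.finrank ℝ (LinearMap.range X.mulVecLin) = j := hX
  have h2 := LinearMap.finrank_range_add_finrank_ker X.mulVecLin
  rw [h1] at h2
  simp only [Module.finrank_pi, Fintype.card_fin] at h2
  have hker : LinearMap.ker X.mulVecLin = ⊥ := Submodule.finrank_eq_zero.mp (by omega)
  exact LinearMap.ker_eq_bot.mp hker

lemma aux_gram_posDef {j n : ℕ} (A : Matrix (Fin n) (Fin n) ℝ) (hA : A.PosDef)
    (X : Matrix (Fin n) (Fin j) ℝ) (hX : Function.Injective X.mulVec) :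
    (Xᵀ * A * X).PosDef := by
  rw [← conjTranspose_eq_transpose_of_trivial]
  refine .of_dotProduct_mulVec_pos (isHermitian_conjTranspose_mul_mul X hA.1) fun x hx => ?_
  have hXx : X *ᵥ x ≠ 0 := fun h => hx (hX (by simpa using h))
  simpa only [star_mulVec, dotProduct_mulVec, vecMul_vecMul] using hA.dotProduct_mulVec_pos hXx

/-- for positive definite `A` and nested full-rank Jacobians
`B = C * M`, the asymptotic covariance of the MLE in the smaller parameter
space is dominated in the Loewner order by that in the larger one:
`B (BᵀAB)⁻¹ Bᵀ ≤ C (CᵀAC)⁻¹ Cᵀ`. -/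
theorem nested_asymptotic_covariance_le
    (n k m : ℕ) (hkm : k ≤ m) (hmn : m ≤ n)
    (A : Matrix (Fin n) (Fin n) ℝ) (hA : A.PosDef)
    (B : Matrix (Fin n) (Fin k) ℝ) (hB : B.rank = k)
    (C : Matrix (Fin n) (Fin m) ℝ) (hC : C.rank = m)
    (M : Matrix (Fin m) (Fin k) ℝ) (hBCM : B = C * M) :
    (C * (Cᵀ * A * C)⁻¹ * Cᵀ - B * (Bᵀ * A * B)⁻¹ * Bᵀ).PosSemidef := by
  -- the square root of A
  obtain ⟨S, hSdef⟩ : ∃ S : Matrix (Fin n) (Fin n) ℝ, S = (open MatrixOrder in CFC.sqrt A) := ⟨_, rfl⟩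
  have hS : S.PosSemidef := open MatrixOrder in hSdef ▸ (CFC.sqrt_nonneg A).posSemidef
  have hSsymm : Sᵀ = S := by
    rw [← conjTranspose_eq_transpose_of_trivial]; exact hS.1
  have hSS : S * S = A := open MatrixOrder in hSdef ▸ CFC.sqrt_mul_sqrt_self A hA.posSemidef.nonneg
  have hSdetu : IsUnit S.det := by
    have hmul : S.det * S.det = A.det := by rw [← det_mul, hSS]
    have hd : A.det ≠ 0 := hA.det_pos.ne'
    exact IsUnit.mk0 _ (fun h => hd (by rw [← hmul, h, zero_mul]))
  have hSinv : S⁻¹ * S = 1 := nonsing_inv_mul S hSdetu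
  have hSinv' : S * S⁻¹ = 1 := mul_nonsing_inv S hSdetu
  have hSinvT : S⁻¹ᵀ = S⁻¹ := by rw [transpose_nonsing_inv, hSsymm]
  -- transformed matrices
  obtain ⟨B', hB'def⟩ : ∃ X, X = S * B := ⟨_, rfl⟩
  obtain ⟨C', hC'def⟩ : ∃ X, X = S * C := ⟨_, rfl⟩
  have hB'gram : B'ᵀ * B' = Bᵀ * A * B := by
    rw [hB'def, transpose_mul, hSsymm, ← hSS]; simp only [Matrix.mul_assoc]
  have hC'gram : C'ᵀ * C' = Cᵀ * A * C := by
    rw [hC'def, transpose_mul, hSsymm, ← hSS]; simp only [Matrix.mul_assoc]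
  have hBAB : (Bᵀ * A * B).PosDef := aux_gram_posDef A hA B (aux_mulVec_injective B hB)
  have hCAC : (Cᵀ * A * C).PosDef := aux_gram_posDef A hA C (aux_mulVec_injective C hC)
  -- the two projections
  obtain ⟨P, hPdef⟩ : ∃ X, X = B' * (Bᵀ * A * B)⁻¹ * B'ᵀ := ⟨_, rfl⟩
  obtain ⟨Q, hQdef⟩ : ∃ X, X = C' * (Cᵀ * A * C)⁻¹ * C'ᵀ := ⟨_, rfl⟩
  have hBABinv : (Bᵀ * A * B)⁻¹ * (Bᵀ * A * B) = 1 :=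
    nonsing_inv_mul _ (isUnit_iff_isUnit_det _ |>.mp hBAB.isUnit)
  have hCACinv : (Cᵀ * A * C)⁻¹ * (Cᵀ * A * C) = 1 :=
    nonsing_inv_mul _ (isUnit_iff_isUnit_det _ |>.mp hCAC.isUnit)
  have hBABsymm : (Bᵀ * A * B)⁻¹ᵀ = (Bᵀ * A * B)⁻¹ := by
    rw [transpose_nonsing_inv]
    congr 1
    rw [← conjTranspose_eq_transpose_of_trivial]
    exact hBAB.isHermitian
  have hCACsymm : (Cᵀ * A * C)⁻¹ᵀ = (Cᵀ * A * C)⁻¹ := by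
    rw [transpose_nonsing_inv]
    congr 1
    rw [← conjTranspose_eq_transpose_of_trivial]
    exact hCAC.isHermitian
  have hPsymm : Pᵀ = P := by
    rw [hPdef, transpose_mul, transpose_mul, transpose_transpose, hBABsymm]; simp only [Matrix.mul_assoc]
  have hQsymm : Qᵀ = Q := by
    rw [hQdef, transpose_mul, transpose_mul, transpose_transpose, hCACsymm]; simp only [Matrix.mul_assoc]
  have hPP : P * P = P := by
    rw [hPdef]
    calc B' * (Bᵀ * A * B)⁻¹ * B'ᵀ * (B' * (Bᵀ * A * B)⁻¹ * B'ᵀ)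
        = B' * ((Bᵀ * A * B)⁻¹ * (B'ᵀ * B')) * ((Bᵀ * A * B)⁻¹ * B'ᵀ) := by
          simp only [Matrix.mul_assoc]
      _ = B' * (Bᵀ * A * B)⁻¹ * B'ᵀ := by
          rw [hB'gram, hBABinv]; simp only [Matrix.mul_one, Matrix.mul_assoc]
  have hQQ : Q * Q = Q := by
    rw [hQdef]
    calc C' * (Cᵀ * A * C)⁻¹ * C'ᵀ * (C' * (Cᵀ * A * C)⁻¹ * C'ᵀ)
        = C' * ((Cᵀ * A * C)⁻¹ * (C'ᵀ * C')) * ((Cᵀ * A * C)⁻¹ * C'ᵀ) := by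
          simp only [Matrix.mul_assoc]
      _ = C' * (Cᵀ * A * C)⁻¹ * C'ᵀ := by
          rw [hC'gram, hCACinv]; simp only [Matrix.mul_one, Matrix.mul_assoc]
  have hQB' : Q * B' = B' := by
    have hB'C' : B' = C' * M := by rw [hB'def, hC'def, hBCM, Matrix.mul_assoc]
    rw [hQdef, hB'C']
    calc C' * (Cᵀ * A * C)⁻¹ * C'ᵀ * (C' * M)
        = C' * ((Cᵀ * A * C)⁻¹ * (C'ᵀ * C')) * M := by simp only [Matrix.mul_assoc]
      _ = C' * M := by rw [hC'gram, hCACinv]; simp only [Matrix.mul_one, Matrix.mul_assoc]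
  have hQP : Q * P = P := by
    rw [hPdef, ← Matrix.mul_assoc, ← Matrix.mul_assoc, hQB']
  have hPQ : P * Q = P := by
    have := congrArg transpose hQP
    rwa [transpose_mul, hPsymm, hQsymm] at this
  -- Q - P is PSD
  have hD : (Q - P).PosSemidef := by
    have hsq : (Q - P)ᴴ * (Q - P) = Q - P := by
      rw [conjTranspose_eq_transpose_of_trivial, transpose_sub, hPsymm, hQsymm,
        Matrix.sub_mul, Matrix.mul_sub, Matrix.mul_sub, hPP, hQP, hPQ, hQQ]
      abel
    rw [← hsq]
    exact posSemidef_conjTranspose_mul_self _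
  -- conjugate back by S⁻¹
  have hQconj : S⁻¹ * Q * S⁻¹ = C * (Cᵀ * A * C)⁻¹ * Cᵀ := by
    rw [hQdef, hC'def, transpose_mul, hSsymm]
    simp only [← Matrix.mul_assoc, hSinv, Matrix.one_mul]
    rw [Matrix.mul_assoc, hSinv', Matrix.mul_one]
  have hPconj : S⁻¹ * P * S⁻¹ = B * (Bᵀ * A * B)⁻¹ * Bᵀ := by
    rw [hPdef, hB'def, transpose_mul, hSsymm]
    simp only [← Matrix.mul_assoc, hSinv, Matrix.one_mul]
    rw [Matrix.mul_assoc, hSinv', Matrix.mul_one]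
  have key : C * (Cᵀ * A * C)⁻¹ * Cᵀ - B * (Bᵀ * A * B)⁻¹ * Bᵀ
      = S⁻¹ * (Q - P) * (S⁻¹)ᴴ := by
    rw [conjTranspose_eq_transpose_of_trivial, hSinvT, Matrix.mul_sub, Matrix.sub_mul,
      hQconj, hPconj]
  rw [key]
  exact hD.mul_mul_conjTranspose_same S⁻¹
end

section
/- Let A be a real n×n positive definite matrix, let B be a real n×k matrix of rank k, let C be a real n×m matrix of rank m (with k ≤ m ≤ n), and suppose there exists a real m×k matrix M such that B = C·M. Then Tr(B (BᵀAB)⁻¹ Bᵀ) ≤ Tr(C (CᵀAC)⁻¹ Cᵀ). -/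
open Matrix Module
open scoped MatrixOrder

lemma aux_mulVec_inj {n k : ℕ} {B : Matrix (Fin n) (Fin k) ℝ} (hB : B.rank = k)
    {x : Fin k → ℝ} (hx : B *ᵥ x = 0) : x = 0 := by
  have h := B.mulVecLin.finrank_range_add_finrank_ker
  have hdom : finrank ℝ (Fin k → ℝ) = k := by simp
  rw [hdom] at h
  have hrank : finrank ℝ (LinearMap.range B.mulVecLin) = k := hB
  have hker0 : finrank ℝ (LinearMap.ker B.mulVecLin) = 0 := by omega
  have hker : LinearMap.ker B.mulVecLin = ⊥ := Submodule.finrank_eq_zero.mp hker0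
  have : x ∈ LinearMap.ker B.mulVecLin := by simpa [LinearMap.mem_ker] using hx
  simpa [hker] using this

lemma aux_posDef_conj {n k : ℕ} {A : Matrix (Fin n) (Fin n) ℝ} (hA : A.PosDef)
    {B : Matrix (Fin n) (Fin k) ℝ} (hB : ∀ x : Fin k → ℝ, B *ᵥ x = 0 → x = 0) :
    (Bᵀ * A * B).PosDef := by
  rw [posDef_iff_dotProduct_mulVec]
  constructor
  · have := isHermitian_conjTranspose_mul_mul B hA.1
    simpa [conjTranspose_eq_transpose_of_trivial] using this
  · intro x hx
    have hBx : B *ᵥ x ≠ 0 := fun h => hx (hB x h)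
    have hpos := hA.dotProduct_mulVec_pos hBx
    have : star x ⬝ᵥ (Bᵀ * A * B) *ᵥ x = star (B *ᵥ x) ⬝ᵥ A *ᵥ (B *ᵥ x) := by
      simp [star, ← mulVec_mulVec, dotProduct_mulVec, vecMul_transpose]
    rw [this]; exact hpos

lemma aux_trace_nonneg {n : ℕ} (X : Matrix (Fin n) (Fin n) ℝ) : 0 ≤ (Xᵀ * X).trace := by
  rw [Matrix.trace]
  refine Finset.sum_nonneg fun i _ => ?_
  rw [Matrix.diag, Matrix.mul_apply]
  exact Finset.sum_nonneg fun j _ => mul_self_nonneg _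

/-- for positive definite `A` and nested full-rank Jacobians
`B = C * M`, the traces of the asymptotic covariances satisfy
`Tr(B (BᵀAB)⁻¹ Bᵀ) ≤ Tr(C (CᵀAC)⁻¹ Cᵀ)`. -/
theorem nested_asymptotic_covariance_trace_le
    (n k m : ℕ) (hkm : k ≤ m) (hmn : m ≤ n)
    (A : Matrix (Fin n) (Fin n) ℝ) (hA : A.PosDef)
    (B : Matrix (Fin n) (Fin k) ℝ) (hB : B.rank = k)
    (C : Matrix (Fin n) (Fin m) ℝ) (hC : C.rank = m)
    (M : Matrix (Fin m) (Fin k) ℝ) (hBCM : B = C * M) :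
    (B * (Bᵀ * A * B)⁻¹ * Bᵀ).trace ≤ (C * (Cᵀ * A * C)⁻¹ * Cᵀ).trace := by
  classical
  set S := CFC.sqrt A with hSdef
  have hS2 : S * S = A := CFC.sqrt_mul_sqrt_self A hA.posSemidef.nonneg
  have hSherm : Sᵀ = S := by
    have := (CFC.sqrt_nonneg A).posSemidef.1
    simpa [conjTranspose_eq_transpose_of_trivial] using this.eq
  have hSdet : IsUnit S.det := by
    have hdetA : 0 < A.det := hA.det_pos
    have hmul : S.det * S.det = A.det := by rw [← det_mul, hS2]
    refine isUnit_iff_ne_zero.mpr fun h => ?_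
    rw [h, mul_zero] at hmul
    exact hdetA.ne' hmul.symm
  have hSiS : S⁻¹ * S = 1 := nonsing_inv_mul S hSdet
  have hSinvT : (S⁻¹)ᵀ = S⁻¹ := by rw [transpose_nonsing_inv, hSherm]
  set B' := S * B with hB'def
  set C' := S * C with hC'def
  -- Gram matrices
  set G := Bᵀ * A * B with hGdef
  set H := Cᵀ * A * C with hHdef
  have hGeq : G = B'ᵀ * B' := by
    rw [hGdef, hB'def, transpose_mul, hSherm, ← hS2]
    simp only [Matrix.mul_assoc]
  have hHeq : H = C'ᵀ * C' := by
    rw [hHdef, hC'def, transpose_mul, hSherm, ← hS2]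
    simp only [Matrix.mul_assoc]
  have hG : G.PosDef := aux_posDef_conj hA (fun x hx => aux_mulVec_inj hB hx)
  have hH : H.PosDef := aux_posDef_conj hA (fun x hx => aux_mulVec_inj hC hx)
  have hGdet : IsUnit G.det := (isUnit_iff_isUnit_det G).mp hG.isUnit
  have hHdet : IsUnit H.det := (isUnit_iff_isUnit_det H).mp hH.isUnit
  have hGiG : G⁻¹ * G = 1 := nonsing_inv_mul G hGdet
  have hHiH : H⁻¹ * H = 1 := nonsing_inv_mul H hHdet
  have hGT : (G⁻¹)ᵀ = G⁻¹ := by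
    rw [transpose_nonsing_inv]
    congr 1
    simpa [conjTranspose_eq_transpose_of_trivial] using hG.1.eq
  have hHT : (H⁻¹)ᵀ = H⁻¹ := by
    rw [transpose_nonsing_inv]
    congr 1
    simpa [conjTranspose_eq_transpose_of_trivial] using hH.1.eq
  set P := B' * G⁻¹ * B'ᵀ with hPdef
  set Q := C' * H⁻¹ * C'ᵀ with hQdef
  have hPT : Pᵀ = P := by
    rw [hPdef]; simp only [transpose_mul, transpose_transpose, hGT, Matrix.mul_assoc]
  have hQT : Qᵀ = Q := by
    rw [hQdef]; simp only [transpose_mul, transpose_transpose, hHT, Matrix.mul_assoc]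
  have hPP : P * P = P := by
    have h1 : P * P = B' * (G⁻¹ * ((B'ᵀ * B') * (G⁻¹ * B'ᵀ))) := by
      rw [hPdef]; simp only [Matrix.mul_assoc]
    rw [h1, ← hGeq, ← Matrix.mul_assoc G⁻¹ G, hGiG, Matrix.one_mul,
      ← Matrix.mul_assoc B' G⁻¹ B'ᵀ]
  have hQQ : Q * Q = Q := by
    have h1 : Q * Q = C' * (H⁻¹ * ((C'ᵀ * C') * (H⁻¹ * C'ᵀ))) := by
      rw [hQdef]; simp only [Matrix.mul_assoc]
    rw [h1, ← hHeq, ← Matrix.mul_assoc H⁻¹ H, hHiH, Matrix.one_mul,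
      ← Matrix.mul_assoc C' H⁻¹ C'ᵀ]
  have hB'CM : B' = C' * M := by
    rw [hB'def, hC'def, hBCM, Matrix.mul_assoc]
  have hQC' : Q * C' = C' := by
    have h1 : Q * C' = C' * (H⁻¹ * (C'ᵀ * C')) := by
      rw [hQdef]; simp only [Matrix.mul_assoc]
    rw [h1, ← hHeq, hHiH, Matrix.mul_one]
  have hQB' : Q * B' = B' := by
    rw [hB'CM, ← Matrix.mul_assoc, hQC']
  have hQP : Q * P = P := by
    rw [hPdef, ← Matrix.mul_assoc, ← Matrix.mul_assoc, hQB']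
  have hPQ : P * Q = P := by
    have := congrArg Matrix.transpose hQP
    rwa [transpose_mul, hPT, hQT] at this
  -- express the two sides via P and Q
  have hBrec : B = S⁻¹ * B' := by
    rw [hB'def, ← Matrix.mul_assoc, hSiS, Matrix.one_mul]
  have hCrec : C = S⁻¹ * C' := by
    rw [hC'def, ← Matrix.mul_assoc, hSiS, Matrix.one_mul]
  have hL : B * G⁻¹ * Bᵀ = S⁻¹ * (P * S⁻¹) := by
    conv_lhs => rw [hBrec]
    rw [hPdef]
    simp only [transpose_mul, hSinvT, Matrix.mul_assoc]
  have hR : C * H⁻¹ * Cᵀ = S⁻¹ * (Q * S⁻¹) := by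
    conv_lhs => rw [hCrec]
    rw [hQdef]
    simp only [transpose_mul, hSinvT, Matrix.mul_assoc]
  rw [hL, hR, ← sub_nonneg, ← trace_sub]
  have hDT : (Q - P)ᵀ = Q - P := by rw [transpose_sub, hPT, hQT]
  have hDD : (Q - P) * (Q - P) = Q - P := by
    rw [Matrix.sub_mul, Matrix.mul_sub, Matrix.mul_sub, hPP, hQQ, hQP, hPQ, sub_self, sub_zero]
  have hX : ((Q - P) * S⁻¹)ᵀ * ((Q - P) * S⁻¹) = S⁻¹ * ((Q - P) * S⁻¹) := by
    rw [transpose_mul, hSinvT, hDT, Matrix.mul_assoc, ← Matrix.mul_assoc (Q - P) (Q - P), hDD]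
  have hdiff : S⁻¹ * (Q * S⁻¹) - S⁻¹ * (P * S⁻¹) = ((Q - P) * S⁻¹)ᵀ * ((Q - P) * S⁻¹) := by
    rw [← Matrix.mul_sub, ← Matrix.sub_mul, ← hX]
  rw [hdiff]
  exact aux_trace_nonneg _
end

section
/- Let n, N ≥ 1 and let X be a real n×N matrix whose rank is strictly less than n (equivalently, the columns of X do not span ℝⁿ). Then the Gaussian likelihood function L(Σ) = (det Σ)^{−N/2} (2π)^{−nN/2} exp(−(1/2) Tr(Σ⁻¹ X Xᵀ)), defined on the set of real n×n positive definite matrices Σ, is not bounded above: for every real number K there exists a positive definite Σ with L(Σ) > K. -/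
open Matrix Real

private lemma aux_psd_smul {n : ℕ} {A : Matrix (Fin n) (Fin n) ℝ} (hA : A.PosSemidef)
    {c : ℝ} (hc : 0 ≤ c) : (c • A).PosSemidef := by
  refine ⟨?_, fun x => ?_⟩
  · unfold Matrix.IsHermitian
    rw [conjTranspose_smul, hA.1]
    simp
  · exact (hA.smul hc).2 x

/-- if the sample matrix `X` (n×N) has rank < n, the Gaussian
likelihood `L(Σ) = (det Σ)^{-N/2} (2π)^{-nN/2} exp(-(1/2) Tr(Σ⁻¹ X Xᵀ))` is not
bounded above on the set of positive definite matrices. -/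
theorem gaussian_likelihood_unbounded_of_rank_deficient
    (n N : ℕ) (hn : 1 ≤ n) (hN : 1 ≤ N)
    (X : Matrix (Fin n) (Fin N) ℝ) (hrank : X.rank < n) :
    ∀ K : ℝ, ∃ S : Matrix (Fin n) (Fin n) ℝ, S.PosDef ∧
      K < S.det ^ (-(N : ℝ) / 2) * (2 * π) ^ (-(n : ℝ) * N / 2) *
            Real.exp (-(1 / 2) * (S⁻¹ * (X * Xᵀ)).trace) := by
  intro K
  -- find a kernel vector v ≠ 0 of Xᵀ
  have hrT : Xᵀ.rank < n := by rwa [Matrix.rank_transpose]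
  obtain ⟨v, hv_mem, hv0⟩ : ∃ v ∈ LinearMap.ker Xᵀ.mulVecLin, v ≠ 0 := by
    rw [← Submodule.ne_bot_iff]
    intro hbot
    have h := LinearMap.finrank_range_add_finrank_ker Xᵀ.mulVecLin
    rw [hbot, finrank_bot, add_zero] at h
    have : Xᵀ.rank = n := by
      rw [Matrix.rank]
      simpa using h
    omega
  have hXv : Xᵀ *ᵥ v = 0 := hv_mem
  have h1 : ∀ j, (∑ k, X k j * v k) = 0 := by
    intro j
    have := congrFun hXv j
    simpa [Matrix.mulVec, dotProduct, Matrix.transpose_apply] using this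
  set d : ℝ := v ⬝ᵥ v with hd_def
  have hd : 0 < d := by
    rcases lt_or_eq_of_le (Finset.sum_nonneg fun i _ => mul_self_nonneg (v i)) with h | h
    · exact h
    · exact absurd (dotProduct_self_eq_zero.mp h.symm) hv0
  -- the constant factor
  set C : ℝ := (2 * π) ^ (-(n : ℝ) * N / 2) * Real.exp (-(1 / 2) * (X * Xᵀ).trace) with hC_def
  have hC : 0 < C :=
    mul_pos (Real.rpow_pos_of_pos (by positivity) _) (Real.exp_pos _)
  set B : ℝ := max (K / C) 0 + 1 with hB_def
  have hB1 : 1 ≤ B := by simp [hB_def, le_add_iff_nonneg_left, le_max_right]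
  have hB0 : 0 < B := lt_of_lt_of_le one_pos hB1
  set ε : ℝ := B ^ (-2 / (N : ℝ)) with hε_def
  have hε0 : 0 < ε := Real.rpow_pos_of_pos hB0 _
  have hε1 : ε ≤ 1 := Real.rpow_le_one_of_one_le_of_nonpos hB1
    (div_nonpos_of_nonpos_of_nonneg (by norm_num) (Nat.cast_nonneg N))
  -- the projection matrix
  set P : Matrix (Fin n) (Fin n) ℝ := d⁻¹ • vecMulVec v v with hP_def
  have hPP : P * P = P := by
    have hvv : vecMulVec v v * vecMulVec v v = d • vecMulVec v v := by
      ext i j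
      simp only [Matrix.mul_apply, vecMulVec_apply, Matrix.smul_apply, smul_eq_mul,
        hd_def, dotProduct]
      rw [Finset.sum_mul]
      exact Finset.sum_congr rfl fun k _ => by ring
    rw [hP_def, smul_mul_smul_comm, hvv, smul_smul]
    congr 1
    field_simp
  have hPH : Pᴴ = P := by
    ext i j
    simp [hP_def, vecMulVec_apply, mul_comm]
  set S : Matrix (Fin n) (Fin n) ℝ := 1 - (1 - ε) • P with hS_def
  set T : Matrix (Fin n) (Fin n) ℝ := 1 + (ε⁻¹ - 1) • P with hT_def
  have hST : S * T = 1 := by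
    have hcoef : (ε⁻¹ - 1) - (1 - ε) - (1 - ε) * (ε⁻¹ - 1) = 0 := by
      field_simp
      ring
    have : S * T = 1 + ((ε⁻¹ - 1) - (1 - ε) - (1 - ε) * (ε⁻¹ - 1)) • P := by
      simp only [hS_def, hT_def, sub_mul, mul_add, one_mul, mul_one,
        Matrix.smul_mul, Matrix.mul_smul, hPP, smul_smul]
      module
    rw [this, hcoef, zero_smul, add_zero]
  have hSinv : S⁻¹ = T := inv_eq_right_inv hST
  -- determinant of S
  have hdet : S.det = ε := by
    have hS' : S = 1 + replicateCol Unit ((-(1 - ε) * d⁻¹) • v) * replicateRow Unit v := by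
      rw [← vecMulVec_eq]
      rw [hS_def]
      ext i j
      simp [vecMulVec_apply, hP_def]
      ring
    rw [hS', Matrix.det_one_add_replicateCol_mul_replicateRow]
    rw [dotProduct_smul, ← hd_def, smul_eq_mul]
    field_simp
    ring
  -- the trace term
  have hvX : vecMulVec v v * X = 0 := by
    ext i j
    simp only [Matrix.mul_apply, vecMulVec_apply, Matrix.zero_apply]
    have : ∑ k, v i * v k * X k j = v i * ∑ k, X k j * v k := by
      rw [Finset.mul_sum]
      exact Finset.sum_congr rfl fun k _ => by ring
    rw [this, h1 j, mul_zero]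
  have hPX : P * (X * Xᵀ) = 0 := by
    rw [hP_def, Matrix.smul_mul, ← Matrix.mul_assoc, hvX, Matrix.zero_mul, smul_zero]
  have htrace : (T * (X * Xᵀ)).trace = (X * Xᵀ).trace := by
    rw [hT_def, add_mul, one_mul, Matrix.smul_mul, hPX, smul_zero, add_zero]
  -- S is positive definite
  have hQ : (1 - P).PosSemidef := by
    have hQQ : (1 - P)ᴴ * (1 - P) = 1 - P := by
      rw [conjTranspose_sub, conjTranspose_one, hPH]
      rw [sub_mul, one_mul, mul_sub, mul_one, hPP]
      abel
    have := Matrix.posSemidef_conjTranspose_mul_self (1 - P)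
    rwa [hQQ] at this
  have hSpd : S.PosDef := by
    have hsplit : S = ε • (1 : Matrix (Fin n) (Fin n) ℝ) + (1 - ε) • (1 - P) := by
      rw [hS_def]; module
    have hεI : (ε • (1 : Matrix (Fin n) (Fin n) ℝ)).PosDef := by
      refine ⟨?_, fun x hx => ?_⟩
      · unfold Matrix.IsHermitian
        rw [conjTranspose_smul, conjTranspose_one]
        simp
      · exact (Matrix.PosDef.one.smul hε0).2 hx
    rw [hsplit]
    exact hεI.add_posSemidef (aux_psd_smul hQ (by linarith))
  refine ⟨S, hSpd, ?_⟩
  rw [hSinv, htrace, hdet]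
  have hεrw : ε ^ (-(N : ℝ) / 2) = B := by
    rw [hε_def, ← Real.rpow_mul (le_of_lt hB0)]
    have hN' : (N : ℝ) ≠ 0 := by positivity
    have : -2 / (N : ℝ) * (-(N : ℝ) / 2) = 1 := by field_simp
    rw [this, Real.rpow_one]
  rw [hεrw, mul_assoc, ← hC_def]
  have hKC : K / C < B := lt_of_le_of_lt (le_max_left _ 0)
    (by rw [hB_def]; exact lt_add_of_pos_right _ one_pos)
  exact (div_lt_iff₀ hC).mp hKC
end
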